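/- arXiv:1405.5873 — 9 statements merged into one kernel-verified Lean document; each statement's English description precedes it below -/
import Mathlib

section
/- Water-filling characterization of the one-sided problem: Let I be a nonempty finite index set, let b : I → ℝ satisfy b_i > 0 for all i ∈ I, let A > 0, and let e be a real with 0 < e ≤ |I|·A². Then there exists λ > 0 such that ∑_{i∈I} (min(b_i/λ, A))² = e, and the vector a* defined by a*_i := min(b_i/λ, A) is the unique minimizer of the function a ↦ −∑_{i∈I} a_i·b_i over the feasible set {a : I → ℝ | 0 ≤ a_i ≤ A for all i, and ∑_{i∈I} a_i² ≤ e}. -/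
/-- Water-filling characterization of the one-sided distance-bound problem:
there is a water level `lam > 0` such that `a* i = min (b i / lam) A` exhausts the
energy budget `e` and is the unique minimizer of `a ↦ -∑ i ∈ I, a i * b i`
over `{a | ∀ i ∈ I, 0 ≤ a i ≤ A, ∑ i ∈ I, (a i)^2 ≤ e}`. -/
theorem waterfilling_characterization {ι : Type*} (I : Finset ι) (hI : I.Nonempty)
    (b : ι → ℝ) (hb : ∀ i ∈ I, 0 < b i) (A : ℝ) (hA : 0 < A)
    (e : ℝ) (he : 0 < e) (heA : e ≤ (I.card : ℝ) * A ^ 2) :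
    ∃ lam : ℝ, 0 < lam ∧
      (∑ i ∈ I, (min (b i / lam) A) ^ 2 = e) ∧
      (∀ a : ι → ℝ, (∀ i ∈ I, 0 ≤ a i ∧ a i ≤ A) → (∑ i ∈ I, (a i) ^ 2) ≤ e →
        (-∑ i ∈ I, (min (b i / lam) A) * b i) ≤ -∑ i ∈ I, a i * b i) ∧
      (∀ a : ι → ℝ, (∀ i ∈ I, 0 ≤ a i ∧ a i ≤ A) → (∑ i ∈ I, (a i) ^ 2) ≤ e →
        (-∑ i ∈ I, a i * b i) = (-∑ i ∈ I, (min (b i / lam) A) * b i) →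
        ∀ i ∈ I, a i = min (b i / lam) A) := by
  classical
  set g : ℝ → ℝ := fun l => ∑ i ∈ I, (min (b i / l) A) ^ 2 with hg
  set m : ℝ := I.inf' hI b with hm
  have hmpos : 0 < m := by
    rw [hm, Finset.lt_inf'_iff]; exact hb
  set l0 : ℝ := m / A with hl0
  have hl0pos : 0 < l0 := div_pos hmpos hA
  set B : ℝ := ∑ i ∈ I, (b i) ^ 2 with hB
  have hBnonneg : 0 ≤ B := Finset.sum_nonneg fun i _ => sq_nonneg _
  set l1 : ℝ := max l0 (Real.sqrt (B / e) + 1) with hl1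
  have hl01 : l0 ≤ l1 := le_max_left _ _
  have hl1pos : 0 < l1 := lt_of_lt_of_le hl0pos hl01
  have hl1sq : B / e ≤ l1 ^ 2 := by
    have h1 : Real.sqrt (B / e) + 1 ≤ l1 := le_max_right _ _
    have h0 : 0 ≤ Real.sqrt (B / e) := Real.sqrt_nonneg _
    have : Real.sqrt (B / e) ^ 2 ≤ l1 ^ 2 := by
      apply pow_le_pow_left₀ h0 (le_trans (by linarith) h1)
    rwa [Real.sq_sqrt (div_nonneg hBnonneg he.le)] at this
  -- value at l0
  have hgl0 : g l0 = (I.card : ℝ) * A ^ 2 := by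
    rw [show g l0 = ∑ i ∈ I, (min (b i / l0) A) ^ 2 from rfl]
    have : ∀ i ∈ I, (min (b i / l0) A) ^ 2 = A ^ 2 := by
      intro i hi
      have hAle : A ≤ b i / l0 := by
        rw [le_div_iff₀ hl0pos, hl0, mul_div_cancel₀ _ (ne_of_gt hA)]
        exact Finset.inf'_le _ hi
      rw [min_eq_right hAle]
    rw [Finset.sum_congr rfl this, Finset.sum_const, nsmul_eq_mul]
  -- value at l1
  have hgl1 : g l1 ≤ e := by
    have hterm : ∀ i ∈ I, (min (b i / l1) A) ^ 2 ≤ (b i) ^ 2 / l1 ^ 2 := by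
      intro i hi
      have h1 : 0 ≤ min (b i / l1) A := le_min (div_nonneg (hb i hi).le hl1pos.le) hA.le
      have h2 : min (b i / l1) A ≤ b i / l1 := min_le_left _ _
      calc (min (b i / l1) A) ^ 2 ≤ (b i / l1) ^ 2 := pow_le_pow_left₀ h1 h2 2
        _ = (b i) ^ 2 / l1 ^ 2 := by rw [div_pow]
    calc g l1 ≤ ∑ i ∈ I, (b i) ^ 2 / l1 ^ 2 := Finset.sum_le_sum hterm
      _ = B / l1 ^ 2 := by rw [hB, Finset.sum_div]
      _ ≤ e := by
          rw [div_le_iff₀ (by positivity)]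
          calc B = (B / e) * e := by field_simp
            _ ≤ l1 ^ 2 * e := by nlinarith [hl1sq, he]
            _ = e * l1 ^ 2 := mul_comm _ _
  -- continuity
  have hcont : ContinuousOn g (Set.Icc l0 l1) := by
    apply continuousOn_finset_sum
    intro i _
    exact (continuous_min.comp_continuousOn
      (((continuousOn_const.div continuousOn_id
        (fun x (hx : x ∈ Set.Icc l0 l1) => ne_of_gt (lt_of_lt_of_le hl0pos hx.1))).prodMk
          continuousOn_const))).pow 2
  -- IVT
  have hmem : e ∈ Set.Icc (g l1) (g l0) := ⟨hgl1, by rw [hgl0]; exact heA⟩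
  obtain ⟨lam, hlamIcc, hlam⟩ := intermediate_value_Icc' hl01 hcont hmem
  have hlampos : 0 < lam := lt_of_lt_of_le hl0pos hlamIcc.1
  set astar : ι → ℝ := fun i => min (b i / lam) A with hastar
  have hsum : ∑ i ∈ I, (astar i) ^ 2 = e := hlam
  -- properties of astar
  have hstar_nonneg : ∀ i ∈ I, 0 ≤ astar i := fun i hi =>
    le_min (div_nonneg (hb i hi).le hlampos.le) hA.le
  have hstar_leA : ∀ i ∈ I, astar i ≤ A := fun i _ => min_le_right _ _
  have hbge : ∀ i ∈ I, lam * astar i ≤ b i := by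
    intro i hi
    rcases le_total (b i / lam) A with h | h
    · rw [hastar]; simp only [min_eq_left h]
      rw [mul_div_cancel₀ _ (ne_of_gt hlampos)]
    · rw [hastar]; simp only [min_eq_right h]
      rw [← le_div_iff₀' hlampos]; exact h
  -- key inequality
  have key : ∀ a : ι → ℝ, (∀ i ∈ I, 0 ≤ a i ∧ a i ≤ A) → (∑ i ∈ I, (a i) ^ 2) ≤ e →
      (lam / 2) * ∑ i ∈ I, (a i - astar i) ^ 2 ≤
        (∑ i ∈ I, astar i * b i) - ∑ i ∈ I, a i * b i := by
    intro a ha hae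
    have hident : ∀ i ∈ I,
        astar i * b i - a i * b i - (lam / 2) * (a i - astar i) ^ 2
          = (astar i - a i) * (b i - lam * astar i)
            + (lam / 2) * ((astar i) ^ 2 - (a i) ^ 2) := by
      intro i _; ring
    have hT1 : 0 ≤ ∑ i ∈ I, (astar i - a i) * (b i - lam * astar i) := by
      apply Finset.sum_nonneg
      intro i hi
      rcases le_total (b i / lam) A with h | h
      · have : b i - lam * astar i = 0 := by
          rw [hastar]; simp only [min_eq_left h]
          rw [mul_div_cancel₀ _ (ne_of_gt hlampos)]; ring
        rw [this, mul_zero]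
      · have h1 : astar i - a i ≥ 0 := by
          have : astar i = A := by rw [hastar]; simp [min_eq_right h]
          rw [this]; linarith [(ha i hi).2]
        have h2 : b i - lam * astar i ≥ 0 := by linarith [hbge i hi]
        exact mul_nonneg h1 h2
    have hsplit : ∑ i ∈ I, (astar i * b i - a i * b i - (lam / 2) * (a i - astar i) ^ 2)
        = ∑ i ∈ I, ((astar i - a i) * (b i - lam * astar i)
            + (lam / 2) * ((astar i) ^ 2 - (a i) ^ 2)) :=
      Finset.sum_congr rfl hident
    have hL : ∑ i ∈ I, (astar i * b i - a i * b i - (lam / 2) * (a i - astar i) ^ 2)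
        = (∑ i ∈ I, astar i * b i) - (∑ i ∈ I, a i * b i)
          - (lam / 2) * ∑ i ∈ I, (a i - astar i) ^ 2 := by
      rw [Finset.mul_sum]
      simp [Finset.sum_sub_distrib]
    have hR : ∑ i ∈ I, ((astar i - a i) * (b i - lam * astar i)
            + (lam / 2) * ((astar i) ^ 2 - (a i) ^ 2))
        = (∑ i ∈ I, (astar i - a i) * (b i - lam * astar i))
          + (lam / 2) * ((∑ i ∈ I, (astar i) ^ 2) - ∑ i ∈ I, (a i) ^ 2) := by
      rw [Finset.sum_add_distrib, ← Finset.mul_sum, Finset.sum_sub_distrib]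
    have hE : 0 ≤ (lam / 2) * ((∑ i ∈ I, (astar i) ^ 2) - ∑ i ∈ I, (a i) ^ 2) := by
      apply mul_nonneg (by positivity)
      rw [hsum]; linarith
    have := hsplit
    rw [hL, hR] at this
    linarith
  refine ⟨lam, hlampos, hsum, ?_, ?_⟩
  · intro a ha hae
    have h := key a ha hae
    have h2 : 0 ≤ (lam / 2) * ∑ i ∈ I, (a i - astar i) ^ 2 := by
      apply mul_nonneg (by positivity)
      exact Finset.sum_nonneg fun i _ => sq_nonneg _
    simp only [neg_le_neg_iff]
    linarith
  · intro a ha hae heq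
    have h := key a ha hae
    have heq' : (∑ i ∈ I, astar i * b i) = ∑ i ∈ I, a i * b i := by linarith [neg_injective heq]
    have h0 : (lam / 2) * ∑ i ∈ I, (a i - astar i) ^ 2 ≤ 0 := by linarith
    have hs : ∑ i ∈ I, (a i - astar i) ^ 2 ≤ 0 := by
      by_contra hc
      push_neg at hc
      nlinarith
    have hz : ∀ i ∈ I, (a i - astar i) ^ 2 = 0 := by
      intro i hi
      have := Finset.sum_nonneg (fun j (_ : j ∈ I) => sq_nonneg (a j - astar j))
      have hle := Finset.single_le_sum (fun j (_ : j ∈ I) => sq_nonneg (a j - astar j)) hi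
      nlinarith [sq_nonneg (a i - astar i)]
    intro i hi
    have := hz i hi
    have : a i - astar i = 0 := by
      exact pow_eq_zero_iff (n := 2) (by norm_num) |>.mp this
    linarith [this]
end

section
/- Exact optimum when both sequences discard the same coefficients: Let P3 be a nonempty finite index set, let A, B > 0, and let e_x, e_q ≥ 0 satisfy e_x ≤ |P3|·A² and e_q ≤ |P3|·B². Then the minimum of (a, b) ↦ −∑_{l∈P3} a_l·b_l over all a, b : P3 → ℝ with 0 ≤ a_l ≤ A, 0 ≤ b_l ≤ B, ∑_{l∈P3} a_l² ≤ e_x and ∑_{l∈P3} b_l² ≤ e_q equals −√(e_x)·√(e_q), and it is attained at the constant vectors a_l = √(e_x/|P3|), b_l = √(e_q/|P3|). -/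
/-- Exact optimum when both sequences discard the same coefficients (`P1 = P2 = ∅`):
the minimum of `-∑_{l∈P3} a l * b l` over the capped energy-bounded box equals
`-√eX · √eQ`, attained at the constant vectors `a l = √(eX/|P3|)`, `b l = √(eQ/|P3|)`. -/
theorem same_discarded_coefficients {ι : Type*} (P3 : Finset ι) (hP3 : P3.Nonempty)
    (A B : ℝ) (hA : 0 < A) (hB : 0 < B)
    (eX eQ : ℝ) (heX : 0 ≤ eX) (heQ : 0 ≤ eQ)
    (hXA : eX ≤ (P3.card : ℝ) * A ^ 2) (hQB : eQ ≤ (P3.card : ℝ) * B ^ 2) :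
    IsLeast {v : ℝ | ∃ a b : ι → ℝ,
        (∀ l ∈ P3, 0 ≤ a l ∧ a l ≤ A) ∧ (∀ l ∈ P3, 0 ≤ b l ∧ b l ≤ B) ∧
        (∑ l ∈ P3, (a l) ^ 2) ≤ eX ∧ (∑ l ∈ P3, (b l) ^ 2) ≤ eQ ∧
        v = -∑ l ∈ P3, a l * b l}
      (-(Real.sqrt eX * Real.sqrt eQ)) ∧
    ((∀ l ∈ P3, 0 ≤ Real.sqrt (eX / P3.card) ∧ Real.sqrt (eX / P3.card) ≤ A) ∧
      (∀ l ∈ P3, 0 ≤ Real.sqrt (eQ / P3.card) ∧ Real.sqrt (eQ / P3.card) ≤ B) ∧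
      (∑ _l ∈ P3, (Real.sqrt (eX / P3.card)) ^ 2) ≤ eX ∧
      (∑ _l ∈ P3, (Real.sqrt (eQ / P3.card)) ^ 2) ≤ eQ ∧
      (-∑ _l ∈ P3, Real.sqrt (eX / P3.card) * Real.sqrt (eQ / P3.card))
        = -(Real.sqrt eX * Real.sqrt eQ)) := by
  have hn : (0:ℝ) < P3.card := by exact_mod_cast Finset.card_pos.mpr hP3
  have key : ∀ (e C : ℝ), 0 ≤ e → 0 < C → e ≤ (P3.card:ℝ) * C^2 →
      Real.sqrt (e / P3.card) ≤ C := by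
    intro e C he hC hle
    rw [show C = Real.sqrt (C^2) from (Real.sqrt_sq hC.le).symm]
    apply Real.sqrt_le_sqrt
    rw [div_le_iff₀ hn]
    linarith
  have hsumX : (∑ _l ∈ P3, (Real.sqrt (eX / P3.card)) ^ 2) = eX := by
    rw [Finset.sum_const, nsmul_eq_mul, Real.sq_sqrt (by positivity)]
    field_simp
  have hsumQ : (∑ _l ∈ P3, (Real.sqrt (eQ / P3.card)) ^ 2) = eQ := by
    rw [Finset.sum_const, nsmul_eq_mul, Real.sq_sqrt (by positivity)]
    field_simp
  have hprod : (∑ _l ∈ P3, Real.sqrt (eX / P3.card) * Real.sqrt (eQ / P3.card))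
      = Real.sqrt eX * Real.sqrt eQ := by
    rw [Finset.sum_const, nsmul_eq_mul, ← Real.sqrt_mul (by positivity),
      show eX / P3.card * (eQ / P3.card) = (eX * eQ) / (P3.card:ℝ)^2 by ring,
      Real.sqrt_div (by positivity), Real.sqrt_sq hn.le,
      mul_div_cancel₀ _ hn.ne', Real.sqrt_mul heX]
  refine ⟨⟨⟨fun _ => Real.sqrt (eX / P3.card), fun _ => Real.sqrt (eQ / P3.card),
      fun l _ => ⟨Real.sqrt_nonneg _, key eX A heX hA hXA⟩,
      fun l _ => ⟨Real.sqrt_nonneg _, key eQ B heQ hB hQB⟩,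
      hsumX.le, hsumQ.le, by rw [hprod]⟩, ?_⟩,
    fun l _ => ⟨Real.sqrt_nonneg _, key eX A heX hA hXA⟩,
    fun l _ => ⟨Real.sqrt_nonneg _, key eQ B heQ hB hQB⟩,
    hsumX.le, hsumQ.le, by rw [hprod]⟩
  rintro v ⟨a, b, ha, hb, haE, hbE, rfl⟩
  have hab : 0 ≤ ∑ l ∈ P3, a l * b l :=
    Finset.sum_nonneg fun l hl => mul_nonneg (ha l hl).1 (hb l hl).1
  have h2 : (∑ l ∈ P3, a l * b l) ^ 2 ≤ eX * eQ :=
    le_trans (Finset.sum_mul_sq_le_sq_mul_sq P3 a b)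
      (mul_le_mul haE hbE (Finset.sum_nonneg fun l _ => sq_nonneg _) heX)
  have h1 : ∑ l ∈ P3, a l * b l ≤ Real.sqrt eX * Real.sqrt eQ := by
    rw [← Real.sqrt_sq hab, ← Real.sqrt_mul heX]
    exact Real.sqrt_le_sqrt h2
  linarith
end

section
/- Ordering (exchange) property of optimal solutions: Let (a, b) be an optimal pair for the compressed-distance program, and define the extended vector b̃ on P1 ∪ P3 by b̃_l = b̄_l for l ∈ P1 and b̃_l = b_l for l ∈ P3. Then for any i, j ∈ P1 ∪ P3, if b̃_i > b̃_j then a_i ≥ a_j. Symmetrically, defining ã on P2 ∪ P3 by ã_l = ā_l for l ∈ P2 and ã_l = a_l for l ∈ P3, for any i, j ∈ P2 ∪ P3, if ã_i > ã_j then b_i ≥ b_j. -/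
/-- Feasibility for the compressed-distance program. -/
def Feasible {ι : Type*} [DecidableEq ι] (P1 P2 P3 : Finset ι) (A B eX eQ : ℝ)
    (a b : ι → ℝ) : Prop :=
  (∀ l ∈ P1 ∪ P3, 0 ≤ a l ∧ a l ≤ A) ∧
  (∀ l ∈ P2 ∪ P3, 0 ≤ b l ∧ b l ≤ B) ∧
  (∑ l ∈ P1 ∪ P3, (a l) ^ 2) ≤ eX ∧
  (∑ l ∈ P2 ∪ P3, (b l) ^ 2) ≤ eQ

/-- Objective of the compressed-distance program. -/
def Obj {ι : Type*} (P1 P2 P3 : Finset ι) (bbar abar : ι → ℝ) (a b : ι → ℝ) : ℝ :=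
  -∑ l ∈ P1, a l * bbar l - ∑ l ∈ P2, abar l * b l - ∑ l ∈ P3, a l * b l

lemma swap_mem_of_mem {ι : Type*} [DecidableEq ι] {s : Finset ι} {i j : ι}
    (hi : i ∈ s) (hj : j ∈ s) {l : ι} (hl : l ∈ s) : Equiv.swap i j l ∈ s := by
  rcases eq_or_ne l i with rfl | h1
  · simpa [Equiv.swap_apply_left] using hj
  rcases eq_or_ne l j with rfl | h2
  · simpa [Equiv.swap_apply_right] using hi
  · simpa [Equiv.swap_apply_of_ne_of_ne h1 h2] using hl

lemma sum_swap_eq {ι : Type*} [DecidableEq ι] (s : Finset ι) {i j : ι}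
    (hi : i ∈ s) (hj : j ∈ s) (f : ι → ℝ) :
    ∑ l ∈ s, f (Equiv.swap i j l) = ∑ l ∈ s, f l := by
  apply Finset.sum_equiv (Equiv.swap i j)
  · intro l
    constructor
    · intro hl; exact swap_mem_of_mem hi hj hl
    · intro hl
      have := swap_mem_of_mem hi hj hl
      simpa using this
  · intro l _; rfl

lemma swap_sum_lt {ι : Type*} [DecidableEq ι] (s : Finset ι) {i j : ι}
    (hi : i ∈ s) (hj : j ∈ s) (c x : ι → ℝ) (hc : c j < c i) (hx : x i < x j) :
    ∑ l ∈ s, x l * c l < ∑ l ∈ s, x (Equiv.swap i j l) * c l := by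
  have hij : i ≠ j := by rintro rfl; exact lt_irrefl _ hc
  rw [← Finset.add_sum_erase s (fun l => x l * c l) hi,
      ← Finset.add_sum_erase s (fun l => x (Equiv.swap i j l) * c l) hi]
  have hj' : j ∈ s.erase i := Finset.mem_erase.2 ⟨hij.symm, hj⟩
  rw [← Finset.add_sum_erase _ (fun l => x l * c l) hj',
      ← Finset.add_sum_erase _ (fun l => x (Equiv.swap i j l) * c l) hj']
  have hrest : ∑ l ∈ (s.erase i).erase j, x (Equiv.swap i j l) * c l
      = ∑ l ∈ (s.erase i).erase j, x l * c l := by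
    apply Finset.sum_congr rfl
    intro l hl
    have h2 : l ≠ j := (Finset.mem_erase.1 hl).1
    have h1 : l ≠ i := (Finset.mem_erase.1 (Finset.mem_erase.1 hl).2).1
    rw [Equiv.swap_apply_of_ne_of_ne h1 h2]
  rw [hrest]
  simp only [Equiv.swap_apply_left, Equiv.swap_apply_right]
  nlinarith [mul_pos (sub_pos.2 hx) (sub_pos.2 hc)]

/-- Rewrite the objective with the extended vector `b̃` on `P1 ∪ P3`. -/
lemma obj_eq1 {ι : Type*} [DecidableEq ι] (P1 P2 P3 : Finset ι)
    (h13 : Disjoint P1 P3) (bbar abar a b : ι → ℝ) :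
    Obj P1 P2 P3 bbar abar a b =
      -∑ l ∈ P1 ∪ P3, a l * (if l ∈ P1 then bbar l else b l)
      - ∑ l ∈ P2, abar l * b l := by
  unfold Obj
  rw [Finset.sum_union h13]
  have h1 : ∑ l ∈ P1, a l * (if l ∈ P1 then bbar l else b l) = ∑ l ∈ P1, a l * bbar l :=
    Finset.sum_congr rfl (fun l hl => by simp [hl])
  have h3 : ∑ l ∈ P3, a l * (if l ∈ P1 then bbar l else b l) = ∑ l ∈ P3, a l * b l :=
    Finset.sum_congr rfl (fun l hl => by
      have : l ∉ P1 := fun h => Finset.disjoint_left.1 h13 h hl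
      simp [this])
  rw [h1, h3]; ring

/-- Rewrite the objective with the extended vector `ã` on `P2 ∪ P3`. -/
lemma obj_eq2 {ι : Type*} [DecidableEq ι] (P1 P2 P3 : Finset ι)
    (h23 : Disjoint P2 P3) (bbar abar a b : ι → ℝ) :
    Obj P1 P2 P3 bbar abar a b =
      -∑ l ∈ P2 ∪ P3, b l * (if l ∈ P2 then abar l else a l)
      - ∑ l ∈ P1, a l * bbar l := by
  unfold Obj
  rw [Finset.sum_union h23]
  have h2 : ∑ l ∈ P2, b l * (if l ∈ P2 then abar l else a l) = ∑ l ∈ P2, abar l * b l :=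
    Finset.sum_congr rfl (fun l hl => by simp [hl, mul_comm])
  have h3 : ∑ l ∈ P3, b l * (if l ∈ P2 then abar l else a l) = ∑ l ∈ P3, a l * b l :=
    Finset.sum_congr rfl (fun l hl => by
      have : l ∉ P2 := fun h => Finset.disjoint_left.1 h23 h hl
      simp [this, mul_comm])
  rw [h2, h3]; ring

/-- Ordering (exchange) property of optimal solutions: extending `b` by the known
magnitudes `b̄` on `P1` (resp. `a` by `ā` on `P2`), the optimal `a` (resp. `b`) is
ordered consistently with the extended vector. -/
theorem ordering_property_of_optimal_solutions {ι : Type*} [DecidableEq ι]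
    (P1 P2 P3 : Finset ι)
    (h12 : Disjoint P1 P2) (h13 : Disjoint P1 P3) (h23 : Disjoint P2 P3)
    (A B eX eQ : ℝ) (hA : 0 < A) (hB : 0 < B) (heX : 0 ≤ eX) (heQ : 0 ≤ eQ)
    (bbar abar : ι → ℝ)
    (hbbar : ∀ l ∈ P1, B ≤ bbar l) (habar : ∀ l ∈ P2, A ≤ abar l)
    (a b : ι → ℝ)
    (hfeas : Feasible P1 P2 P3 A B eX eQ a b)
    (hopt : ∀ a' b' : ι → ℝ, Feasible P1 P2 P3 A B eX eQ a' b' →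
      Obj P1 P2 P3 bbar abar a b ≤ Obj P1 P2 P3 bbar abar a' b') :
    (∀ i ∈ P1 ∪ P3, ∀ j ∈ P1 ∪ P3,
      (if i ∈ P1 then bbar i else b i) > (if j ∈ P1 then bbar j else b j) →
      a j ≤ a i) ∧
    (∀ i ∈ P2 ∪ P3, ∀ j ∈ P2 ∪ P3,
      (if i ∈ P2 then abar i else a i) > (if j ∈ P2 then abar j else a j) →
      b j ≤ b i) := by
  obtain ⟨hfa, hfb, hfx, hfq⟩ := hfeas
  constructor
  · intro i hi j hj hgt
    by_contra hlt
    push_neg at hlt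
    set a' : ι → ℝ := fun l => a (Equiv.swap i j l) with ha'
    have hfeas' : Feasible P1 P2 P3 A B eX eQ a' b := by
      refine ⟨fun l hl => hfa _ (swap_mem_of_mem hi hj hl), hfb, ?_, hfq⟩
      calc (∑ l ∈ P1 ∪ P3, (a' l) ^ 2)
          = ∑ l ∈ P1 ∪ P3, (a l) ^ 2 := sum_swap_eq _ hi hj (fun l => (a l) ^ 2)
        _ ≤ eX := hfx
    have hle := hopt a' b hfeas'
    rw [obj_eq1 P1 P2 P3 h13 bbar abar a b, obj_eq1 P1 P2 P3 h13 bbar abar a' b] at hle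
    have hkey := swap_sum_lt (P1 ∪ P3) hi hj
      (fun l => if l ∈ P1 then bbar l else b l) a hgt hlt
    linarith
  · intro i hi j hj hgt
    by_contra hlt
    push_neg at hlt
    set b' : ι → ℝ := fun l => b (Equiv.swap i j l) with hb'
    have hfeas' : Feasible P1 P2 P3 A B eX eQ a b' := by
      refine ⟨hfa, fun l hl => hfb _ (swap_mem_of_mem hi hj hl), hfx, ?_⟩
      calc (∑ l ∈ P2 ∪ P3, (b' l) ^ 2)
          = ∑ l ∈ P2 ∪ P3, (b l) ^ 2 := sum_swap_eq _ hi hj (fun l => (b l) ^ 2)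
        _ ≤ eQ := hfq
    have hle := hopt a b' hfeas'
    rw [obj_eq2 P1 P2 P3 h23 bbar abar a b, obj_eq2 P1 P2 P3 h23 bbar abar a b'] at hle
    have hkey := swap_sum_lt (P2 ∪ P3) hi hj
      (fun l => if l ∈ P2 then abar l else a l) b hgt hlt
    linarith
end

section
/- Symmetrization on the common unknown coefficients preserves optimality: Let P3 be nonempty, let (a, b) be an optimal pair for the compressed-distance program, and set e_x' := ∑_{l∈P3} a_l² and e_q' := ∑_{l∈P3} b_l². Then the pair (a', b') that agrees with (a, b) on P1 and P2 and has constant entries a'_l = √(e_x'/|P3|) and b'_l = √(e_q'/|P3|) for all l ∈ P3 is feasible and also optimal. -/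
open Finset Real

lemma sym_side {ι : Type*} [DecidableEq ι] (P1 P3 : Finset ι) (h13 : Disjoint P1 P3)
    (hP3 : P3.Nonempty) (A eX : ℝ) (hA : 0 < A) (a : ι → ℝ)
    (hbd : ∀ l ∈ P1 ∪ P3, 0 ≤ a l ∧ a l ≤ A)
    (hsum : ∑ l ∈ P1 ∪ P3, a l ^ 2 ≤ eX) :
    (∀ l ∈ P1 ∪ P3,
      0 ≤ (if l ∈ P3 then Real.sqrt ((∑ m ∈ P3, a m ^ 2) / P3.card) else a l) ∧
      (if l ∈ P3 then Real.sqrt ((∑ m ∈ P3, a m ^ 2) / P3.card) else a l) ≤ A) ∧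
    (∑ l ∈ P1 ∪ P3,
      (if l ∈ P3 then Real.sqrt ((∑ m ∈ P3, a m ^ 2) / P3.card) else a l) ^ 2 ≤ eX) := by
  set s := ∑ m ∈ P3, a m ^ 2 with hs_def
  have hn : (0:ℝ) < P3.card := by
    exact_mod_cast Finset.card_pos.mpr hP3
  have hs0 : 0 ≤ s := Finset.sum_nonneg fun i _ => sq_nonneg _
  have hdiv0 : 0 ≤ s / P3.card := div_nonneg hs0 hn.le
  have hsA : s ≤ P3.card * A ^ 2 := by
    calc s ≤ ∑ m ∈ P3, A ^ 2 := Finset.sum_le_sum (fun i hi => by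
            have h := hbd i (Finset.mem_union_right _ hi)
            exact pow_le_pow_left₀ h.1 h.2 2)
      _ = P3.card * A ^ 2 := by rw [Finset.sum_const, nsmul_eq_mul]
  have hdivA : s / P3.card ≤ A ^ 2 := (div_le_iff₀ hn).mpr (by linarith [mul_comm (P3.card : ℝ) (A^2)])
  have hsqrtA : Real.sqrt (s / P3.card) ≤ A := by
    calc Real.sqrt (s / P3.card) ≤ Real.sqrt (A ^ 2) := Real.sqrt_le_sqrt hdivA
      _ = A := Real.sqrt_sq hA.le
  refine ⟨fun l hl => ?_, ?_⟩
  · by_cases h : l ∈ P3 <;> simp only [h, if_true, if_false]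
    · exact ⟨Real.sqrt_nonneg _, hsqrtA⟩
    · exact hbd l hl
  · have heq : ∑ l ∈ P1 ∪ P3,
        (if l ∈ P3 then Real.sqrt (s / P3.card) else a l) ^ 2 = ∑ l ∈ P1 ∪ P3, a l ^ 2 := by
      rw [Finset.sum_union h13, Finset.sum_union h13]
      congr 1
      · exact Finset.sum_congr rfl fun l hl => by
          rw [if_neg (Finset.disjoint_left.mp h13 hl)]
      · rw [Finset.sum_congr rfl (fun l hl => by rw [if_pos hl])]
        rw [Finset.sum_const, nsmul_eq_mul, Real.sq_sqrt hdiv0,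
          mul_div_cancel₀ _ hn.ne']
    rw [heq]; exact hsum

/-- Symmetrization on the common unknown coefficients preserves optimality: replacing
the entries of an optimal pair on `P3` by the constants `√(eX'/|P3|)`, `√(eQ'/|P3|)`,
where `eX' = ∑_{l∈P3} a l ^ 2` and `eQ' = ∑_{l∈P3} b l ^ 2`, yields a feasible and
optimal pair. -/
theorem symmetrization_preserves_optimality {ι : Type*} [DecidableEq ι]
    (P1 P2 P3 : Finset ι) (hP3 : P3.Nonempty)
    (h12 : Disjoint P1 P2) (h13 : Disjoint P1 P3) (h23 : Disjoint P2 P3)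
    (A B eX eQ : ℝ) (hA : 0 < A) (hB : 0 < B) (heX : 0 ≤ eX) (heQ : 0 ≤ eQ)
    (bbar abar : ι → ℝ)
    (hbbar : ∀ l ∈ P1, B ≤ bbar l) (habar : ∀ l ∈ P2, A ≤ abar l)
    (a b : ι → ℝ)
    (hfeas : Feasible P1 P2 P3 A B eX eQ a b)
    (hopt : ∀ a' b' : ι → ℝ, Feasible P1 P2 P3 A B eX eQ a' b' →
      Obj P1 P2 P3 bbar abar a b ≤ Obj P1 P2 P3 bbar abar a' b') :
    Feasible P1 P2 P3 A B eX eQ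
      (fun l => if l ∈ P3 then Real.sqrt ((∑ m ∈ P3, (a m) ^ 2) / P3.card) else a l)
      (fun l => if l ∈ P3 then Real.sqrt ((∑ m ∈ P3, (b m) ^ 2) / P3.card) else b l) ∧
    (∀ a' b' : ι → ℝ, Feasible P1 P2 P3 A B eX eQ a' b' →
      Obj P1 P2 P3 bbar abar
        (fun l => if l ∈ P3 then Real.sqrt ((∑ m ∈ P3, (a m) ^ 2) / P3.card) else a l)
        (fun l => if l ∈ P3 then Real.sqrt ((∑ m ∈ P3, (b m) ^ 2) / P3.card) else b l)
        ≤ Obj P1 P2 P3 bbar abar a' b') := by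
  obtain ⟨hba, hbb, hsa, hsb⟩ := hfeas
  have ha := sym_side P1 P3 h13 hP3 A eX hA a hba hsa
  have hb := sym_side P2 P3 h23 hP3 B eQ hB b hbb hsb
  have hfeas' : Feasible P1 P2 P3 A B eX eQ
      (fun l => if l ∈ P3 then Real.sqrt ((∑ m ∈ P3, (a m) ^ 2) / P3.card) else a l)
      (fun l => if l ∈ P3 then Real.sqrt ((∑ m ∈ P3, (b m) ^ 2) / P3.card) else b l) :=
    ⟨ha.1, hb.1, ha.2, hb.2⟩
  refine ⟨hfeas', fun a' b' hf' => ?_⟩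
  refine le_trans ?_ (hopt a' b' hf')
  -- new obj ≤ old obj
  set sX := ∑ m ∈ P3, a m ^ 2 with hsX
  set sQ := ∑ m ∈ P3, b m ^ 2 with hsQ
  have hn : (0:ℝ) < P3.card := by exact_mod_cast Finset.card_pos.mpr hP3
  have hsX0 : 0 ≤ sX := Finset.sum_nonneg fun i _ => sq_nonneg _
  have hsQ0 : 0 ≤ sQ := Finset.sum_nonneg fun i _ => sq_nonneg _
  unfold Obj
  have e1 : ∑ l ∈ P1, (if l ∈ P3 then Real.sqrt (sX / P3.card) else a l) * bbar l
      = ∑ l ∈ P1, a l * bbar l :=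
    Finset.sum_congr rfl fun l hl => by rw [if_neg (Finset.disjoint_left.mp h13 hl)]
  have e2 : ∑ l ∈ P2, abar l * (if l ∈ P3 then Real.sqrt (sQ / P3.card) else b l)
      = ∑ l ∈ P2, abar l * b l :=
    Finset.sum_congr rfl fun l hl => by rw [if_neg (Finset.disjoint_left.mp h23 hl)]
  have e3 : ∑ l ∈ P3, (if l ∈ P3 then Real.sqrt (sX / P3.card) else a l) *
      (if l ∈ P3 then Real.sqrt (sQ / P3.card) else b l)
      = Real.sqrt sX * Real.sqrt sQ := by
    rw [Finset.sum_congr rfl (fun l hl => by rw [if_pos hl, if_pos hl]),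
      Finset.sum_const, nsmul_eq_mul, ← Real.sqrt_mul (div_nonneg hsX0 hn.le),
      div_mul_div_comm, show (P3.card : ℝ) * P3.card = (P3.card:ℝ)^2 from (sq _).symm,
      Real.sqrt_div (mul_nonneg hsX0 hsQ0), Real.sqrt_sq hn.le,
      mul_div_cancel₀ _ hn.ne', Real.sqrt_mul hsX0]
  have hCS : ∑ l ∈ P3, a l * b l ≤ Real.sqrt sX * Real.sqrt sQ := by
    have h1 := Finset.sum_mul_sq_le_sq_mul_sq P3 a b
    calc ∑ l ∈ P3, a l * b l ≤ |∑ l ∈ P3, a l * b l| := le_abs_self _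
      _ = Real.sqrt ((∑ l ∈ P3, a l * b l)^2) := (Real.sqrt_sq_eq_abs _).symm
      _ ≤ Real.sqrt (sX * sQ) := Real.sqrt_le_sqrt h1
      _ = Real.sqrt sX * Real.sqrt sQ := Real.sqrt_mul hsX0 _
  rw [e1, e2, e3]
  linarith
end

section
/- Global optimality of the decoupled solution when the energies fit outside the common unknowns: Assume in the compressed-distance program that e_x ≤ |P1|·A² and e_q ≤ |P2|·B². Then the minimum of F over all feasible pairs equals m_a + m_b, where m_a is the minimum of a ↦ −∑_{l∈P1} a_l·b̄_l over {a : P1 → ℝ | 0 ≤ a_l ≤ A for all l ∈ P1 and ∑_{l∈P1} a_l² ≤ e_x} and m_b is the minimum of b ↦ −∑_{l∈P2} ā_l·b_l over {b : P2 → ℝ | 0 ≤ b_l ≤ B for all l ∈ P2 and ∑_{l∈P2} b_l² ≤ e_q}; moreover, the minimum of F is attained by a feasible pair whose entries on P3 are all zero. -/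
lemma key_aux {ι : Type*} [DecidableEq ι] (P1 P3 : Finset ι) (h13 : Disjoint P1 P3)
    (A B eX : ℝ) (hA : 0 < A) (hB : 0 < B) (w : ι → ℝ) (hw : ∀ l ∈ P1, B ≤ w l)
    (hfit : eX ≤ (P1.card : ℝ) * A ^ 2) (m : ℝ)
    (hm : ∀ v : ℝ, (∃ x : ι → ℝ, (∀ l ∈ P1, 0 ≤ x l ∧ x l ≤ A) ∧
      (∑ l ∈ P1, (x l) ^ 2) ≤ eX ∧ v = -∑ l ∈ P1, x l * w l) → m ≤ v)
    (x : ι → ℝ) (hx : ∀ l ∈ P1 ∪ P3, 0 ≤ x l ∧ x l ≤ A)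
    (hxe : (∑ l ∈ P1 ∪ P3, (x l) ^ 2) ≤ eX) :
    m ≤ -(∑ l ∈ P1, x l * w l) - B / (2 * A) * ∑ l ∈ P3, (x l) ^ 2 := by
  have hsplit : (∑ l ∈ P1 ∪ P3, (x l)^2) = (∑ l ∈ P1, (x l)^2) + ∑ l ∈ P3, (x l)^2 :=
    Finset.sum_union h13
  set E := ∑ l ∈ P3, (x l)^2 with hE
  have hE0 : 0 ≤ E := Finset.sum_nonneg (fun l _ => sq_nonneg _)
  have h1e : (∑ l ∈ P1, (x l)^2) + E ≤ eX := by rw [← hsplit]; exact hxe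
  have hx1 : ∀ l ∈ P1, 0 ≤ x l ∧ x l ≤ A := fun l hl => hx l (Finset.mem_union_left _ hl)
  rcases eq_or_lt_of_le hE0 with hEz | hEp
  · have h := hm (-∑ l ∈ P1, x l * w l) ⟨x, hx1, by nlinarith, rfl⟩
    have hz : B/(2*A)*E = 0 := by rw [← hEz, mul_zero]
    linarith
  · set S := ∑ l ∈ P1, (A^2 - (x l)^2) with hS
    have hScard : S = (P1.card : ℝ) * A^2 - ∑ l ∈ P1, (x l)^2 := by
      rw [hS, Finset.sum_sub_distrib, Finset.sum_const, nsmul_eq_mul]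
    have hSE : E ≤ S := by nlinarith
    have hSp : 0 < S := lt_of_lt_of_le hEp hSE
    have hfrac : E / S ≤ 1 := (div_le_one hSp).mpr hSE
    have hfrac0 : 0 ≤ E / S := div_nonneg hE0 hSp.le
    set x' := fun l => Real.sqrt ((x l)^2 + (A^2 - (x l)^2) * (E / S)) with hx'
    have hprop : ∀ l ∈ P1, (0 ≤ x' l ∧ x' l ≤ A) ∧ x l ≤ x' l ∧
        (x' l)^2 = (x l)^2 + (A^2-(x l)^2)*(E/S) := by
      intro l hl
      obtain ⟨h0, hA'⟩ := hx1 l hl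
      have htn : 0 ≤ (A^2-(x l)^2)*(E/S) := mul_nonneg (by nlinarith) hfrac0
      have harg : 0 ≤ (x l)^2 + (A^2-(x l)^2)*(E/S) := by positivity
      have hsq : (x' l)^2 = (x l)^2 + (A^2-(x l)^2)*(E/S) := Real.sq_sqrt harg
      have hle : x' l ≤ A := by
        rw [show A = Real.sqrt (A^2) from (Real.sqrt_sq hA.le).symm]
        apply Real.sqrt_le_sqrt
        have h2 := mul_le_mul_of_nonneg_left hfrac (show (0:ℝ) ≤ A^2 - (x l)^2 by nlinarith)
        nlinarith
      have hge : x l ≤ x' l := by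
        rw [show x l = Real.sqrt ((x l)^2) from (Real.sqrt_sq h0).symm]
        apply Real.sqrt_le_sqrt; linarith
      exact ⟨⟨Real.sqrt_nonneg _, hle⟩, hge, hsq⟩
    have hsum2 : (∑ l ∈ P1, (x' l)^2) ≤ eX := by
      have : (∑ l ∈ P1, (x' l)^2) = (∑ l ∈ P1, (x l)^2) + E := by
        rw [Finset.sum_congr rfl (fun l hl => (hprop l hl).2.2), Finset.sum_add_distrib,
          ← Finset.sum_mul, ← hS, mul_div_cancel₀ _ (ne_of_gt hSp)]
      linarith
    have hobj : (∑ l ∈ P1, x l * w l) + B/(2*A) * E ≤ ∑ l ∈ P1, x' l * w l := by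
      have hterm : ∀ l ∈ P1, x l * w l + B/(2*A) * ((A^2-(x l)^2)*(E/S)) ≤ x' l * w l := by
        intro l hl
        obtain ⟨⟨h0', hle⟩, hge, hsq⟩ := hprop l hl
        obtain ⟨h0, hA'⟩ := hx1 l hl
        have hwl := hw l hl
        have hd : (A^2-(x l)^2)*(E/S) ≤ (x' l - x l) * (2*A) := by nlinarith
        have hdiv : B/(2*A) * ((A^2-(x l)^2)*(E/S)) ≤ B/(2*A) * ((x' l - x l) * (2*A)) :=
          mul_le_mul_of_nonneg_left hd (by positivity)
        have heq : B/(2*A) * ((x' l - x l) * (2*A)) = B * (x' l - x l) := by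
          field_simp
        have : B * (x' l - x l) ≤ w l * (x' l - x l) :=
          mul_le_mul_of_nonneg_right hwl (by linarith)
        nlinarith
      calc (∑ l ∈ P1, x l * w l) + B/(2*A) * E
          = ∑ l ∈ P1, (x l * w l + B/(2*A) * ((A^2-(x l)^2)*(E/S))) := by
            rw [Finset.sum_add_distrib, ← Finset.mul_sum, ← Finset.sum_mul, ← hS,
              mul_div_cancel₀ _ (ne_of_gt hSp)]
        _ ≤ ∑ l ∈ P1, x' l * w l := Finset.sum_le_sum hterm
    have h := hm (-∑ l ∈ P1, x' l * w l)
      ⟨x', fun l hl => (hprop l hl).1, hsum2, rfl⟩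
    linarith



/-- Global optimality of the decoupled solution when the energy budgets fit outside
the common unknown coefficients (`eX ≤ |P1|·A²` and `eQ ≤ |P2|·B²`): the minimum of
the objective equals `ma + mb`, the sum of the minima of the two decoupled problems,
and it is attained by a feasible pair vanishing on `P3`. -/
theorem decoupled_solution_globally_optimal {ι : Type*} [DecidableEq ι]
    (P1 P2 P3 : Finset ι)
    (h12 : Disjoint P1 P2) (h13 : Disjoint P1 P3) (h23 : Disjoint P2 P3)
    (A B eX eQ : ℝ) (hA : 0 < A) (hB : 0 < B) (heX : 0 ≤ eX) (heQ : 0 ≤ eQ)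
    (bbar abar : ι → ℝ)
    (hbbar : ∀ l ∈ P1, B ≤ bbar l) (habar : ∀ l ∈ P2, A ≤ abar l)
    (hfitX : eX ≤ (P1.card : ℝ) * A ^ 2) (hfitQ : eQ ≤ (P2.card : ℝ) * B ^ 2)
    (ma mb : ℝ)
    (hma : IsLeast {v : ℝ | ∃ a : ι → ℝ, (∀ l ∈ P1, 0 ≤ a l ∧ a l ≤ A) ∧
      (∑ l ∈ P1, (a l) ^ 2) ≤ eX ∧ v = -∑ l ∈ P1, a l * bbar l} ma)
    (hmb : IsLeast {v : ℝ | ∃ b : ι → ℝ, (∀ l ∈ P2, 0 ≤ b l ∧ b l ≤ B) ∧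
      (∑ l ∈ P2, (b l) ^ 2) ≤ eQ ∧ v = -∑ l ∈ P2, abar l * b l} mb) :
    IsLeast {v : ℝ | ∃ a b : ι → ℝ, Feasible P1 P2 P3 A B eX eQ a b ∧
      v = Obj P1 P2 P3 bbar abar a b} (ma + mb) ∧
    ∃ a b : ι → ℝ, Feasible P1 P2 P3 A B eX eQ a b ∧
      (∀ l ∈ P3, a l = 0 ∧ b l = 0) ∧
      Obj P1 P2 P3 bbar abar a b = ma + mb := by
  classical
  have couple : ∀ s t : ℝ, s * t ≤ B/(2*A)*s^2 + A/(2*B)*t^2 := by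
    intro s t
    have h : B/(2*A)*s^2 + A/(2*B)*t^2 - s*t = (B*s - A*t)^2/(2*A*B) := by
      field_simp; ring
    have h2 : (0:ℝ) ≤ (B*s - A*t)^2/(2*A*B) := by positivity
    linarith
  obtain ⟨⟨a0, ha01, ha02, ha03⟩, hma2⟩ := hma
  obtain ⟨⟨b0, hb01, hb02, hb03⟩, hmb2⟩ := hmb
  set a : ι → ℝ := fun l => if l ∈ P1 then a0 l else 0 with ha
  set b : ι → ℝ := fun l => if l ∈ P2 then b0 l else 0 with hb
  have hfeas : Feasible P1 P2 P3 A B eX eQ a b := by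
    refine ⟨?_, ?_, ?_, ?_⟩
    · intro l _; by_cases h : l ∈ P1 <;> simp [ha, h]
      · exact ha01 l h
      · exact hA.le
    · intro l _; by_cases h : l ∈ P2 <;> simp [hb, h]
      · exact hb01 l h
      · exact hB.le
    · rw [Finset.sum_union h13]
      have h1 : ∑ l ∈ P1, (a l)^2 = ∑ l ∈ P1, (a0 l)^2 :=
        Finset.sum_congr rfl fun l hl => by simp [ha, hl]
      have h2 : ∑ l ∈ P3, (a l)^2 = 0 := by
        apply Finset.sum_eq_zero; intro l hl
        have : l ∉ P1 := fun h => Finset.disjoint_left.mp h13 h hl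
        simp [ha, this]
      rw [h1, h2]; simpa using ha02
    · rw [Finset.sum_union h23]
      have h1 : ∑ l ∈ P2, (b l)^2 = ∑ l ∈ P2, (b0 l)^2 :=
        Finset.sum_congr rfl fun l hl => by simp [hb, hl]
      have h2 : ∑ l ∈ P3, (b l)^2 = 0 := by
        apply Finset.sum_eq_zero; intro l hl
        have : l ∉ P2 := fun h => Finset.disjoint_left.mp h23 h hl
        simp [hb, this]
      rw [h1, h2]; simpa using hb02
  have hzero : ∀ l ∈ P3, a l = 0 ∧ b l = 0 := by
    intro l hl
    have h1 : l ∉ P1 := fun h => Finset.disjoint_left.mp h13 h hl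
    have h2 : l ∉ P2 := fun h => Finset.disjoint_left.mp h23 h hl
    simp [ha, hb, h1, h2]
  have hobj : Obj P1 P2 P3 bbar abar a b = ma + mb := by
    rw [Obj]
    have h1 : ∑ l ∈ P1, a l * bbar l = ∑ l ∈ P1, a0 l * bbar l :=
      Finset.sum_congr rfl fun l hl => by simp [ha, hl]
    have h2 : ∑ l ∈ P2, abar l * b l = ∑ l ∈ P2, abar l * b0 l :=
      Finset.sum_congr rfl fun l hl => by simp [hb, hl]
    have h3 : ∑ l ∈ P3, a l * b l = 0 :=
      Finset.sum_eq_zero fun l hl => by rw [(hzero l hl).1, zero_mul]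
    rw [h1, h2, h3, ha03, hb03]; ring
  refine ⟨⟨⟨a, b, hfeas, hobj.symm⟩, ?_⟩, a, b, hfeas, hzero, hobj⟩
  rintro v ⟨a', b', ⟨hf1, hf2, hf3, hf4⟩, rfl⟩
  have hka : ma ≤ -(∑ l ∈ P1, a' l * bbar l) - B / (2 * A) * ∑ l ∈ P3, (a' l) ^ 2 :=
    key_aux P1 P3 h13 A B eX hA hB bbar hbbar hfitX ma
      (fun v hv => hma2 hv) a' hf1 hf3
  have hkb : mb ≤ -(∑ l ∈ P2, b' l * abar l) - A / (2 * B) * ∑ l ∈ P3, (b' l) ^ 2 :=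
    key_aux P2 P3 h23 B A eQ hB hA abar habar hfitQ mb
      (fun v hv => by
        obtain ⟨x, h1, h2, h3⟩ := hv
        exact hmb2 ⟨x, h1, h2, by
          rw [h3]; congr 1; exact Finset.sum_congr rfl fun l _ => mul_comm _ _⟩)
      b' hf2 hf4
  have hcp : ∑ l ∈ P3, a' l * b' l ≤
      B/(2*A) * ∑ l ∈ P3, (a' l)^2 + A/(2*B) * ∑ l ∈ P3, (b' l)^2 := by
    rw [Finset.mul_sum, Finset.mul_sum, ← Finset.sum_add_distrib]
    exact Finset.sum_le_sum fun l _ => couple (a' l) (b' l)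
  have hmc : ∑ l ∈ P2, b' l * abar l = ∑ l ∈ P2, abar l * b' l :=
    Finset.sum_congr rfl fun l _ => mul_comm _ _
  rw [Obj]
  linarith [hka, hkb, hcp, hmc]
end

section
/- Existence and uniqueness of the positive fixed point of the energy-allocation map: Let P1 and P2 be finite index sets, let A, B > 0, let b̄ : P1 → ℝ satisfy b̄_l ≥ B for all l ∈ P1, let ā : P2 → ℝ satisfy ā_l ≥ A for all l ∈ P2, and let e_x, e_q > 0. Assume that e_x > |P1|·A² or e_q > |P2|·B² (or both). Then there exists a unique pair (e_x', e_q') with e_x' > 0 and e_q' > 0 satisfying the nonlinear system e_x' = e_x − ∑_{l∈P1} min(b̄_l²·(e_x'/e_q'), A²) and e_q' = e_q − ∑_{l∈P2} min(ā_l²·(e_q'/e_x'), B²). -/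
/-- Existence and uniqueness of the positive fixed point of the energy-allocation map
in the double-waterfilling algorithm: if `eX > |P1|·A²` or `eQ > |P2|·B²`, then there
is a unique pair `(eX', eQ')` of positive residual energies satisfying the nonlinear
system. -/
theorem energy_allocation_unique_fixed_point {ι : Type*} (P1 P2 : Finset ι)
    (A B : ℝ) (hA : 0 < A) (hB : 0 < B)
    (bbar abar : ι → ℝ)
    (hbbar : ∀ l ∈ P1, B ≤ bbar l) (habar : ∀ l ∈ P2, A ≤ abar l)
    (eX eQ : ℝ) (heX : 0 < eX) (heQ : 0 < eQ)
    (hbig : (P1.card : ℝ) * A ^ 2 < eX ∨ (P2.card : ℝ) * B ^ 2 < eQ) :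
    ∃! p : ℝ × ℝ, 0 < p.1 ∧ 0 < p.2 ∧
      p.1 = eX - ∑ l ∈ P1, min ((bbar l) ^ 2 * (p.1 / p.2)) (A ^ 2) ∧
      p.2 = eQ - ∑ l ∈ P2, min ((abar l) ^ 2 * (p.2 / p.1)) (B ^ 2) := by
  classical
  set f : ℝ → ℝ := fun r => eX - ∑ l ∈ P1, min ((bbar l) ^ 2 * r) (A ^ 2) with hf
  set g : ℝ → ℝ := fun r => eQ - ∑ l ∈ P2, min ((abar l) ^ 2 / r) (B ^ 2) with hg
  set H : ℝ → ℝ := fun r => eX - ∑ l ∈ P1, min ((bbar l) ^ 2 * r) (A ^ 2)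
      - r * eQ + ∑ l ∈ P2, min ((abar l) ^ 2) (B ^ 2 * r) with hH
  -- identity relating H, f, g on positive reals
  have hfg : ∀ r : ℝ, 0 < r → H r = f r - r * g r := by
    intro r hr
    have hterm : ∀ l ∈ P2, min ((abar l) ^ 2) (B ^ 2 * r)
        = r * min ((abar l) ^ 2 / r) (B ^ 2) := by
      intro l _
      rw [mul_min_of_nonneg _ _ hr.le, mul_div_cancel₀ _ hr.ne', mul_comm]
    simp only [hH, hf, hg]
    rw [Finset.sum_congr rfl hterm, ← Finset.mul_sum]
    ring
  -- continuity of H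
  have hcont : Continuous H := by
    simp only [hH]
    refine Continuous.add (Continuous.sub (Continuous.sub continuous_const ?_)
      (continuous_id.mul continuous_const)) ?_
    · exact continuous_finset_sum _ fun l _ =>
        ((continuous_const.mul continuous_id).min continuous_const)
    · exact continuous_finset_sum _ fun l _ =>
        (continuous_const.min (continuous_const.mul continuous_id))
  -- monotonicity
  have fmono : ∀ {r s : ℝ}, r ≤ s → f s ≤ f r := by
    intro r s hrs
    apply sub_le_sub_left
    exact Finset.sum_le_sum fun l _ =>
      min_le_min (mul_le_mul_of_nonneg_left hrs (sq_nonneg _)) le_rfl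
  have gmono : ∀ {r s : ℝ}, 0 < r → r ≤ s → g r ≤ g s := by
    intro r s hr hrs
    apply sub_le_sub_left
    refine Finset.sum_le_sum fun l _ => min_le_min ?_ le_rfl
    rw [div_eq_mul_inv, div_eq_mul_inv]
    exact mul_le_mul_of_nonneg_left (inv_anti₀ hr hrs) (sq_nonneg _)
  -- key strict lemma: past a root with positive g, H is negative
  have key : ∀ r s : ℝ, 0 < r → H r = 0 → 0 < g r → r < s → H s < 0 := by
    intro r s hr hr0 hgr hrs
    have hs : 0 < s := hr.trans hrs
    have h1 : f s ≤ f r := fmono hrs.le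
    have h2 : g r ≤ g s := gmono hr hrs.le
    have h3 : r * g r < s * g s :=
      lt_of_lt_of_le (mul_lt_mul_of_pos_right hrs hgr)
        (mul_le_mul_of_nonneg_left h2 hs.le)
    have hHr := hfg r hr
    have hHs := hfg s hs
    rw [hHr] at hr0
    rw [hHs]
    linarith
  -- existence of a root of H
  have hS1 : (0:ℝ) ≤ ∑ l ∈ P1, (bbar l) ^ 2 := Finset.sum_nonneg fun l _ => sq_nonneg _
  have hS2 : (0:ℝ) ≤ ∑ l ∈ P2, (abar l) ^ 2 := Finset.sum_nonneg fun l _ => sq_nonneg _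
  set r1 : ℝ := eX / (∑ l ∈ P1, (bbar l) ^ 2 + eQ + 1) with hr1def
  set r2 : ℝ := (eX + (∑ l ∈ P2, (abar l) ^ 2) + 1) / eQ with hr2def
  have hden : 0 < ∑ l ∈ P1, (bbar l) ^ 2 + eQ + 1 := by linarith
  have hr1 : 0 < r1 := div_pos heX hden
  have hr2 : 0 < r2 := div_pos (by linarith) heQ
  have hHr1 : 0 < H r1 := by
    have h1 : ∑ l ∈ P1, min ((bbar l) ^ 2 * r1) (A ^ 2)
        ≤ ∑ l ∈ P1, (bbar l) ^ 2 * r1 :=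
      Finset.sum_le_sum fun l _ => min_le_left _ _
    have h2 : (0:ℝ) ≤ ∑ l ∈ P2, min ((abar l) ^ 2) (B ^ 2 * r1) :=
      Finset.sum_nonneg fun l _ => le_min (sq_nonneg _) (by positivity)
    have h3 : ∑ l ∈ P1, (bbar l) ^ 2 * r1 = (∑ l ∈ P1, (bbar l) ^ 2) * r1 :=
      (Finset.sum_mul _ _ _).symm
    have h4 : r1 * (∑ l ∈ P1, (bbar l) ^ 2 + eQ + 1) = eX := by
      rw [hr1def, div_mul_eq_mul_div, mul_div_assoc, div_self hden.ne', mul_one]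
    have h4' : (∑ l ∈ P1, (bbar l) ^ 2) * r1 + r1 * eQ + r1 = eX := by
      rw [← h4]; ring
    simp only [hH]
    linarith
  have hHr2 : H r2 < 0 := by
    have h1 : (0:ℝ) ≤ ∑ l ∈ P1, min ((bbar l) ^ 2 * r2) (A ^ 2) :=
      Finset.sum_nonneg fun l _ => le_min (by positivity) (by positivity)
    have h2 : ∑ l ∈ P2, min ((abar l) ^ 2) (B ^ 2 * r2) ≤ ∑ l ∈ P2, (abar l) ^ 2 :=
      Finset.sum_le_sum fun l _ => min_le_left _ _
    have h3 : r2 * eQ = eX + (∑ l ∈ P2, (abar l) ^ 2) + 1 := by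
      rw [hr2def, div_mul_cancel₀ _ heQ.ne']
    simp only [hH]
    linarith
  have hr12 : r1 ≤ r2 := by
    rw [hr1def, hr2def, div_le_div_iff₀ hden heQ]
    nlinarith [mul_nonneg heX.le hS1, mul_nonneg hS2 hS1, mul_nonneg hS2 heQ.le,
      mul_nonneg heX.le hS2, mul_pos heX heQ]
  obtain ⟨r0, hr0mem, hr0⟩ :=
    intermediate_value_Icc' hr12 hcont.continuousOn ⟨hHr2.le, hHr1.le⟩
  have hr0pos : 0 < r0 := lt_of_lt_of_le hr1 hr0mem.1
  have hfr0 : f r0 = r0 * g r0 := by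
    have := hfg r0 hr0pos
    rw [hr0] at this
    linarith
  -- positivity of f r0 and g r0
  have hpos : 0 < f r0 ∧ 0 < g r0 := by
    rcases hbig with hb | hb
    · have hfpos : 0 < f r0 := by
        have : ∑ l ∈ P1, min ((bbar l) ^ 2 * r0) (A ^ 2) ≤ (P1.card : ℝ) * A ^ 2 := by
          calc ∑ l ∈ P1, min ((bbar l) ^ 2 * r0) (A ^ 2)
              ≤ ∑ l ∈ P1, A ^ 2 := Finset.sum_le_sum fun l _ => min_le_right _ _
            _ = (P1.card : ℝ) * A ^ 2 := by
                rw [Finset.sum_const, nsmul_eq_mul]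
        simp only [hf]
        linarith
      refine ⟨hfpos, ?_⟩
      nlinarith [hfr0]
    · have hgpos : 0 < g r0 := by
        have : ∑ l ∈ P2, min ((abar l) ^ 2 / r0) (B ^ 2) ≤ (P2.card : ℝ) * B ^ 2 := by
          calc ∑ l ∈ P2, min ((abar l) ^ 2 / r0) (B ^ 2)
              ≤ ∑ l ∈ P2, B ^ 2 := Finset.sum_le_sum fun l _ => min_le_right _ _
            _ = (P2.card : ℝ) * B ^ 2 := by
                rw [Finset.sum_const, nsmul_eq_mul]
        simp only [hg]
        linarith
      exact ⟨hfr0 ▸ mul_pos hr0pos hgpos, hgpos⟩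
  obtain ⟨hfpos0, hgpos0⟩ := hpos
  -- ratio of the candidate solution
  have hratio : f r0 / g r0 = r0 := by
    rw [hfr0, mul_div_assoc, div_self hgpos0.ne', mul_one]
  have hratio' : g r0 / f r0 = 1 / r0 := by
    rw [hfr0, mul_comm, div_mul_eq_div_div, div_self hgpos0.ne']
  refine ⟨(f r0, g r0), ⟨hfpos0, hgpos0, ?_, ?_⟩, ?_⟩
  · simp only [hratio]; rfl
  · simp only [hratio']
    have : ∀ l ∈ P2, min ((abar l) ^ 2 * (1 / r0)) (B ^ 2)
        = min ((abar l) ^ 2 / r0) (B ^ 2) := by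
      intro l _; rw [mul_one_div]
    rw [Finset.sum_congr rfl this]
  -- uniqueness
  · rintro ⟨q1, q2⟩ ⟨hq1, hq2, hqe1, hqe2⟩
    simp only at hq1 hq2 hqe1 hqe2
    set s : ℝ := q1 / q2 with hsdef
    have hs : 0 < s := div_pos hq1 hq2
    have hfs : f s = q1 := by rw [hf]; exact hqe1.symm
    have hgs : g s = q2 := by
      simp only [hg]
      have : ∀ l ∈ P2, min ((abar l) ^ 2 / s) (B ^ 2)
          = min ((abar l) ^ 2 * (q2 / q1)) (B ^ 2) := by
        intro l _
        rw [hsdef, div_div_eq_mul_div, mul_div_assoc]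
      rw [Finset.sum_congr rfl this]
      exact hqe2.symm
    have hHs : H s = 0 := by
      rw [hfg s hs, hfs, hgs, hsdef, div_mul_cancel₀ _ hq2.ne', sub_self]
    have hseq : s = r0 := by
      rcases lt_trichotomy s r0 with h | h | h
      · have := key s r0 hs hHs (hgs ▸ hq2) h
        rw [hr0] at this
        exact absurd this (lt_irrefl 0)
      · exact h
      · have := key r0 s hr0pos hr0 hgpos0 h
        rw [hHs] at this
        exact absurd this (lt_irrefl 0)
    have : q1 = f r0 := by rw [← hseq, hfs]
    have : q2 = g r0 := by rw [← hseq, hgs]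
    exact Prod.ext (by rw [← hseq, hfs]) (by rw [← hseq, hgs])
end

section
/- Strict monotonicity of the ratio function in the fixed-point computation: Let P1 and P2 be finite index sets, A, B > 0, b̄ : P1 → ℝ with b̄_l ≥ B for all l ∈ P1, ā : P2 → ℝ with ā_l ≥ A for all l ∈ P2, and e_x, e_q > 0. Define N(γ) := e_x − ∑_{l∈P1} min(b̄_l²·γ, A²) and D(γ) := e_q − ∑_{l∈P2} min(ā_l²/γ, B²) for γ > 0, and let S := {γ > 0 | D(γ) > 0 and N(γ) ≥ 0}. Then the function h(γ) := γ − N(γ)/D(γ) is continuous and strictly increasing on S. -/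
/-- Strict monotonicity and continuity of the ratio function
`h(γ) = γ - N(γ)/D(γ)` on the set `S = {γ > 0 | D(γ) > 0, N(γ) ≥ 0}`, where
`N(γ) = eX - ∑_{l∈P1} min(b̄_l²·γ, A²)` and `D(γ) = eQ - ∑_{l∈P2} min(ā_l²/γ, B²)`. -/
theorem ratio_function_continuous_strict_mono {ι : Type*} (P1 P2 : Finset ι)
    (A B : ℝ) (hA : 0 < A) (hB : 0 < B)
    (bbar abar : ι → ℝ)
    (hbbar : ∀ l ∈ P1, B ≤ bbar l) (habar : ∀ l ∈ P2, A ≤ abar l)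
    (eX eQ : ℝ) (heX : 0 < eX) (heQ : 0 < eQ) :
    ContinuousOn
      (fun γ : ℝ => γ -
        (eX - ∑ l ∈ P1, min ((bbar l) ^ 2 * γ) (A ^ 2)) /
        (eQ - ∑ l ∈ P2, min ((abar l) ^ 2 / γ) (B ^ 2)))
      {γ : ℝ | 0 < γ ∧
        0 < eQ - ∑ l ∈ P2, min ((abar l) ^ 2 / γ) (B ^ 2) ∧
        0 ≤ eX - ∑ l ∈ P1, min ((bbar l) ^ 2 * γ) (A ^ 2)} ∧
    StrictMonoOn
      (fun γ : ℝ => γ -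
        (eX - ∑ l ∈ P1, min ((bbar l) ^ 2 * γ) (A ^ 2)) /
        (eQ - ∑ l ∈ P2, min ((abar l) ^ 2 / γ) (B ^ 2)))
      {γ : ℝ | 0 < γ ∧
        0 < eQ - ∑ l ∈ P2, min ((abar l) ^ 2 / γ) (B ^ 2) ∧
        0 ≤ eX - ∑ l ∈ P1, min ((bbar l) ^ 2 * γ) (A ^ 2)} := by
  have hNc : Continuous fun γ : ℝ => eX - ∑ l ∈ P1, min ((bbar l) ^ 2 * γ) (A ^ 2) := by
    apply continuous_const.sub
    apply continuous_finset_sum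
    intro l _
    exact Continuous.min (continuous_const.mul continuous_id) continuous_const
  have hDc : ContinuousOn (fun γ : ℝ => eQ - ∑ l ∈ P2, min ((abar l) ^ 2 / γ) (B ^ 2))
      {γ : ℝ | γ ≠ 0} := by
    apply ContinuousOn.sub continuousOn_const
    apply continuousOn_finset_sum
    intro l _
    exact ContinuousOn.inf
      (continuousOn_const.div continuousOn_id fun x hx => hx) continuousOn_const
  constructor
  · exact ContinuousOn.sub continuousOn_id
      (ContinuousOn.div hNc.continuousOn
        (hDc.mono fun x hx => hx.1.ne') (fun x hx => hx.2.1.ne'))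
  · intro x hx y hy hxy
    obtain ⟨hx0, hxD, hxN⟩ := hx
    obtain ⟨hy0, hyD, hyN⟩ := hy
    simp only
    have hNle : (eX - ∑ l ∈ P1, min ((bbar l) ^ 2 * y) (A ^ 2)) ≤
        (eX - ∑ l ∈ P1, min ((bbar l) ^ 2 * x) (A ^ 2)) := by
      apply sub_le_sub_left
      apply Finset.sum_le_sum
      intro l _
      exact min_le_min (mul_le_mul_of_nonneg_left hxy.le (sq_nonneg _)) le_rfl
    have hDle : (eQ - ∑ l ∈ P2, min ((abar l) ^ 2 / x) (B ^ 2)) ≤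
        (eQ - ∑ l ∈ P2, min ((abar l) ^ 2 / y) (B ^ 2)) := by
      apply sub_le_sub_left
      apply Finset.sum_le_sum
      intro l _
      exact min_le_min (div_le_div_of_nonneg_left (sq_nonneg _) hx0 hxy.le) le_rfl
    have hdiv : (eX - ∑ l ∈ P1, min ((bbar l) ^ 2 * y) (A ^ 2)) /
        (eQ - ∑ l ∈ P2, min ((abar l) ^ 2 / y) (B ^ 2)) ≤
        (eX - ∑ l ∈ P1, min ((bbar l) ^ 2 * x) (A ^ 2)) /
        (eQ - ∑ l ∈ P2, min ((abar l) ^ 2 / x) (B ^ 2)) :=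
      div_le_div₀ hxN hNle hxD hDle
    linarith
end

section
/- Convexity of the re-parameterized objective: Let P1, P2, P3 be pairwise disjoint finite index sets, and let b̄ : P1 → ℝ and ā : P2 → ℝ have nonnegative entries. Then the function (z, y) ↦ −∑_{l∈P1} b̄_l·√(z_l) − ∑_{l∈P2} ā_l·√(y_l) − ∑_{l∈P3} √(z_l)·√(y_l), defined for z : P1 ∪ P3 → ℝ and y : P2 ∪ P3 → ℝ, is convex on the nonnegative orthant {(z, y) | z_l ≥ 0 for all l ∈ P1 ∪ P3 and y_l ≥ 0 for all l ∈ P2 ∪ P3}. -/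
open Real

private lemma sqrt_concave_aux {a b u v : ℝ} (ha : 0 ≤ a) (hb : 0 ≤ b)
    (hab : a + b = 1) (hu : 0 ≤ u) (hv : 0 ≤ v) :
    a * Real.sqrt u + b * Real.sqrt v ≤ Real.sqrt (a * u + b * v) := by
  have hsu := Real.sq_sqrt hu
  have hsv := Real.sq_sqrt hv
  have h1 := Real.sqrt_nonneg u
  have h2 := Real.sqrt_nonneg v
  rw [Real.le_sqrt (by positivity) (by positivity),
    show a * u + b * v = a * Real.sqrt u ^ 2 + b * Real.sqrt v ^ 2 by rw [hsu, hsv]]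
  nlinarith [mul_nonneg (mul_nonneg ha hb) (sq_nonneg (Real.sqrt u - Real.sqrt v))]

private lemma cauchy_aux {a b z1 z2 y1 y2 : ℝ} (ha : 0 ≤ a) (hb : 0 ≤ b)
    (hz1 : 0 ≤ z1) (hz2 : 0 ≤ z2) (hy1 : 0 ≤ y1) (hy2 : 0 ≤ y2) :
    a * (Real.sqrt z1 * Real.sqrt y1) + b * (Real.sqrt z2 * Real.sqrt y2) ≤
      Real.sqrt (a * z1 + b * z2) * Real.sqrt (a * y1 + b * y2) := by
  have hsz1 := Real.sq_sqrt hz1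
  have hsz2 := Real.sq_sqrt hz2
  have hsy1 := Real.sq_sqrt hy1
  have hsy2 := Real.sq_sqrt hy2
  have n1 := Real.sqrt_nonneg z1
  have n2 := Real.sqrt_nonneg z2
  have n3 := Real.sqrt_nonneg y1
  have n4 := Real.sqrt_nonneg y2
  rw [show Real.sqrt (a * z1 + b * z2) * Real.sqrt (a * y1 + b * y2)
      = Real.sqrt ((a * z1 + b * z2) * (a * y1 + b * y2)) from
      (Real.sqrt_mul (by positivity) _).symm]
  rw [Real.le_sqrt (by positivity) (by positivity),
    show (a * z1 + b * z2) * (a * y1 + b * y2)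
      = (a * Real.sqrt z1 ^ 2 + b * Real.sqrt z2 ^ 2) *
        (a * Real.sqrt y1 ^ 2 + b * Real.sqrt y2 ^ 2) by rw [hsz1, hsz2, hsy1, hsy2]]
  nlinarith [mul_nonneg (mul_nonneg ha hb)
    (sq_nonneg (Real.sqrt z1 * Real.sqrt y2 - Real.sqrt z2 * Real.sqrt y1))]

/-- Convexity of the re-parameterized objective of the distance-bound problem:
`(z, y) ↦ -∑_{l∈P1} b̄_l·√(z_l) - ∑_{l∈P2} ā_l·√(y_l) - ∑_{l∈P3} √(z_l)·√(y_l)`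
is convex on the nonnegative orthant. -/
theorem reparameterized_objective_convexOn {ι : Type*} [DecidableEq ι]
    (P1 P2 P3 : Finset ι)
    (h12 : Disjoint P1 P2) (h13 : Disjoint P1 P3) (h23 : Disjoint P2 P3)
    (bbar abar : ι → ℝ)
    (hbbar : ∀ l ∈ P1, 0 ≤ bbar l) (habar : ∀ l ∈ P2, 0 ≤ abar l) :
    ConvexOn ℝ
      {p : (ι → ℝ) × (ι → ℝ) |
        (∀ l ∈ P1 ∪ P3, 0 ≤ p.1 l) ∧ (∀ l ∈ P2 ∪ P3, 0 ≤ p.2 l)}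
      (fun p : (ι → ℝ) × (ι → ℝ) =>
        -∑ l ∈ P1, bbar l * Real.sqrt (p.1 l)
        - ∑ l ∈ P2, abar l * Real.sqrt (p.2 l)
        - ∑ l ∈ P3, Real.sqrt (p.1 l) * Real.sqrt (p.2 l)) := by
  constructor
  · intro p hp q hq a b ha hb hab
    refine ⟨fun l hl => ?_, fun l hl => ?_⟩
    · have h1 := hp.1 l hl
      have h2 := hq.1 l hl
      simpa using add_nonneg (mul_nonneg ha h1) (mul_nonneg hb h2)
    · have h1 := hp.2 l hl
      have h2 := hq.2 l hl
      simpa using add_nonneg (mul_nonneg ha h1) (mul_nonneg hb h2)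
  · intro p hp q hq a b ha hb hab
    simp only [smul_eq_mul, Prod.fst_add, Prod.snd_add, Prod.smul_fst, Prod.smul_snd,
      Pi.add_apply, Pi.smul_apply, smul_eq_mul]
    have S1 : a * ∑ l ∈ P1, bbar l * Real.sqrt (p.1 l) +
        b * ∑ l ∈ P1, bbar l * Real.sqrt (q.1 l) ≤
        ∑ l ∈ P1, bbar l * Real.sqrt (a * p.1 l + b * q.1 l) := by
      rw [Finset.mul_sum, Finset.mul_sum, ← Finset.sum_add_distrib]
      refine Finset.sum_le_sum fun l hl => ?_
      have hz1 := hp.1 l (Finset.mem_union_left _ hl)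
      have hz2 := hq.1 l (Finset.mem_union_left _ hl)
      have hc := sqrt_concave_aux ha hb hab hz1 hz2
      have hbl := hbbar l hl
      nlinarith [mul_le_mul_of_nonneg_left hc hbl]
    have S2 : a * ∑ l ∈ P2, abar l * Real.sqrt (p.2 l) +
        b * ∑ l ∈ P2, abar l * Real.sqrt (q.2 l) ≤
        ∑ l ∈ P2, abar l * Real.sqrt (a * p.2 l + b * q.2 l) := by
      rw [Finset.mul_sum, Finset.mul_sum, ← Finset.sum_add_distrib]
      refine Finset.sum_le_sum fun l hl => ?_
      have hz1 := hp.2 l (Finset.mem_union_left _ hl)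
      have hz2 := hq.2 l (Finset.mem_union_left _ hl)
      have hc := sqrt_concave_aux ha hb hab hz1 hz2
      have hbl := habar l hl
      nlinarith [mul_le_mul_of_nonneg_left hc hbl]
    have S3 : a * ∑ l ∈ P3, Real.sqrt (p.1 l) * Real.sqrt (p.2 l) +
        b * ∑ l ∈ P3, Real.sqrt (q.1 l) * Real.sqrt (q.2 l) ≤
        ∑ l ∈ P3, Real.sqrt (a * p.1 l + b * q.1 l) * Real.sqrt (a * p.2 l + b * q.2 l) := by
      rw [Finset.mul_sum, Finset.mul_sum, ← Finset.sum_add_distrib]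
      refine Finset.sum_le_sum fun l hl => ?_
      exact cauchy_aux ha hb (hp.1 l (Finset.mem_union_right _ hl))
        (hq.1 l (Finset.mem_union_right _ hl)) (hp.2 l (Finset.mem_union_right _ hl))
        (hq.2 l (Finset.mem_union_right _ hl))
    linarith
end

section
/- The energy constraints are active at every optimum: Assume in the compressed-distance program that e_x > 0, e_q > 0, e_x ≤ (|P1| + |P3|)·A², and e_q ≤ (|P2| + |P3|)·B². Then every optimal pair (a, b) satisfies ∑_{l∈P1∪P3} a_l² = e_x and ∑_{l∈P2∪P3} b_l² = e_q. -/
private lemma sum_diff_one {ι : Type*} [DecidableEq ι] (s : Finset ι) (h h' : ι → ℝ) {l : ι}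
    (hl : l ∈ s) (hag : ∀ x ∈ s, x ≠ l → h' x = h x) :
    ∑ x ∈ s, h' x = ∑ x ∈ s, h x + (h' l - h l) := by
  rw [← Finset.add_sum_erase s h' hl, ← Finset.add_sum_erase s h hl,
    Finset.sum_congr rfl fun x hx =>
      hag x (Finset.mem_of_mem_erase hx) (Finset.ne_of_mem_erase hx)]
  ring

private lemma sum_diff_two {ι : Type*} [DecidableEq ι] (s : Finset ι) (h h' : ι → ℝ) {l m : ι}
    (hl : l ∈ s) (hm : m ∈ s) (hlm : l ≠ m)
    (hag : ∀ x ∈ s, x ≠ l → x ≠ m → h' x = h x) :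
    ∑ x ∈ s, h' x = ∑ x ∈ s, h x + (h' l - h l) + (h' m - h m) := by
  have hm' : m ∈ s.erase l := Finset.mem_erase.2 ⟨Ne.symm hlm, hm⟩
  rw [← Finset.add_sum_erase s h' hl, ← Finset.add_sum_erase s h hl,
    sum_diff_one (s.erase l) h h' hm'
      (fun x hx hxm => hag x (Finset.mem_of_mem_erase hx) (Finset.ne_of_mem_erase hx) hxm)]
  ring

private lemma sum_same {ι : Type*} [DecidableEq ι] (s : Finset ι) (h h' : ι → ℝ)
    (hag : ∀ x ∈ s, h' x = h x) : ∑ x ∈ s, h' x = ∑ x ∈ s, h x :=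
  Finset.sum_congr rfl hag

private lemma key_ineq (C ε δ θ b₁ c a₀ : ℝ) (hc : c ≤ C) (hC : 0 < C) (hε : 0 < ε)
    (hδ : 0 < δ) (hb₁ : 0 < b₁) (hθ : θ * b₁ = δ ^ 2) (hθ0 : 0 ≤ θ)
    (hδle : δ ≤ ε * b₁ / (2 * C)) (ha₀ : 0 ≤ a₀) :
    c * θ - (a₀ + ε) * δ < 0 := by
  have h1 : δ * (2 * C) ≤ ε * b₁ := (le_div_iff₀ (by positivity)).mp hδle
  have h2 : 2 * C * θ ≤ ε * δ := by nlinarith [mul_le_mul_of_nonneg_left h1 hδ.le]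
  nlinarith [mul_le_mul_of_nonneg_right hc hθ0, mul_pos hε hδ]

private lemma obj_swap {ι : Type*} (P1 P2 P3 : Finset ι) (bbar abar : ι → ℝ) (a b : ι → ℝ) :
    Obj P2 P1 P3 abar bbar b a = Obj P1 P2 P3 bbar abar a b := by
  unfold Obj
  have h1 : ∑ l ∈ P1, bbar l * a l = ∑ l ∈ P1, a l * bbar l := by
    exact Finset.sum_congr rfl fun l _ => mul_comm _ _
  have h2 : ∑ l ∈ P2, b l * abar l = ∑ l ∈ P2, abar l * b l := by
    exact Finset.sum_congr rfl fun l _ => mul_comm _ _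
  have h3 : ∑ l ∈ P3, b l * a l = ∑ l ∈ P3, a l * b l := by
    exact Finset.sum_congr rfl fun l _ => mul_comm _ _
  rw [h1, h2, h3]; ring

set_option maxHeartbeats 1000000 in
private lemma tightX {ι : Type*} [DecidableEq ι]
    (P1 P2 P3 : Finset ι) (h13 : Disjoint P1 P3) (h23 : Disjoint P2 P3)
    (A B eX eQ : ℝ) (hA : 0 < A) (hB : 0 < B) (heX : 0 < eX) (heQ : 0 < eQ)
    (hXcap : eX ≤ ((P1.card : ℝ) + (P3.card : ℝ)) * A ^ 2)
    (bbar abar : ι → ℝ) (hbbar : ∀ l ∈ P1, B ≤ bbar l)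
    (a b : ι → ℝ)
    (hfeas : Feasible P1 P2 P3 A B eX eQ a b)
    (hopt : ∀ a' b' : ι → ℝ, Feasible P1 P2 P3 A B eX eQ a' b' →
      Obj P1 P2 P3 bbar abar a b ≤ Obj P1 P2 P3 bbar abar a' b') :
    (∑ l ∈ P1 ∪ P3, (a l) ^ 2) = eX := by
  obtain ⟨ha, hb, hea, heb⟩ := hfeas
  by_contra hne
  have hS : ∑ l ∈ P1 ∪ P3, (a l) ^ 2 < eX := lt_of_le_of_ne hea hne
  set S := ∑ l ∈ P1 ∪ P3, (a l) ^ 2 with hSdef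
  -- there is a coordinate strictly below its cap
  have hex : ∃ l₀ ∈ P1 ∪ P3, a l₀ < A := by
    by_contra hno
    push_neg at hno
    have hall : ∀ l ∈ P1 ∪ P3, a l = A := fun l hl => le_antisymm (ha l hl).2 (hno l hl)
    have hSS : S = ((P1.card : ℝ) + (P3.card : ℝ)) * A ^ 2 := by
      rw [hSdef, Finset.sum_congr rfl (fun l hl => by rw [hall l hl]),
        Finset.sum_const, Finset.card_union_of_disjoint h13]
      push_cast; ring
    linarith
  obtain ⟨l₀, hl₀, hl₀A⟩ := hex
  have h2A1 : (0 : ℝ) < 2 * A + 1 := by linarith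
  set ε := min (A - a l₀) (min ((eX - S) / (2 * A + 1)) 1) with hεdef
  have hεpos : 0 < ε :=
    lt_min (by linarith) (lt_min (div_pos (by linarith) h2A1) one_pos)
  have hε1 : ε ≤ 1 := le_trans (min_le_right _ _) (min_le_right _ _)
  have hε2 : ε ≤ (eX - S) / (2 * A + 1) := le_trans (min_le_right _ _) (min_le_left _ _)
  have hε3 : ε ≤ A - a l₀ := min_le_left _ _
  set a' : ι → ℝ := fun x => if x = l₀ then a l₀ + ε else a x with ha'def
  have ha'l₀ : a' l₀ = a l₀ + ε := by simp [ha'def]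
  have ha'ne : ∀ x, x ≠ l₀ → a' x = a x := fun x hx => by simp [ha'def, hx]
  have hal₀0 : 0 ≤ a l₀ := (ha l₀ hl₀).1
  have hal₀A : a l₀ ≤ A := (ha l₀ hl₀).2
  have ha'bd : ∀ l ∈ P1 ∪ P3, 0 ≤ a' l ∧ a' l ≤ A := by
    intro l hl
    by_cases h : l = l₀
    · subst h; rw [ha'l₀]; constructor <;> linarith
    · rw [ha'ne l h]; exact ha l hl
  have ha'en : ∑ l ∈ P1 ∪ P3, (a' l) ^ 2 ≤ eX := by
    rw [sum_diff_one (P1 ∪ P3) (fun x => (a x) ^ 2) (fun x => (a' x) ^ 2) hl₀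
      (fun x _ hxne => by simp only [ha'ne x hxne]), ha'l₀]
    have h3 : (2 * A + 1) * ε ≤ eX - S := by
      have := (le_div_iff₀ h2A1).mp hε2; linarith
    nlinarith
  -- it suffices to produce a strictly better feasible point
  have hkey : ∃ b' : ι → ℝ, Feasible P1 P2 P3 A B eX eQ a' b' ∧
      Obj P1 P2 P3 bbar abar a' b' < Obj P1 P2 P3 bbar abar a b := by
    rcases Finset.mem_union.1 hl₀ with hP1 | hP3
    · -- l₀ ∈ P1 : coefficient bbar l₀ ≥ B > 0
      have hl₀P3 : l₀ ∉ P3 := Finset.disjoint_left.1 h13 hP1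
      refine ⟨b, ⟨ha'bd, hb, ha'en, heb⟩, ?_⟩
      unfold Obj
      rw [sum_diff_one P1 (fun x => a x * bbar x) (fun x => a' x * bbar x) hP1
        (fun x _ hxne => by simp only [ha'ne x hxne]),
        sum_same P3 (fun x => a x * b x) (fun x => a' x * b x)
        (fun x hx => by simp only [ha'ne x (fun he => hl₀P3 (he ▸ hx))]), ha'l₀]
      have hBb : B ≤ bbar l₀ := hbbar l₀ hP1
      nlinarith [mul_pos hεpos (lt_of_lt_of_le hB hBb)]
    · -- l₀ ∈ P3
      have hl₀P1 : l₀ ∉ P1 := Finset.disjoint_right.1 h13 hP3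
      have hl₀P2 : l₀ ∉ P2 := Finset.disjoint_right.1 h23 hP3
      have hl₀23 : l₀ ∈ P2 ∪ P3 := Finset.mem_union_right _ hP3
      have hbl₀0 : 0 ≤ b l₀ := (hb l₀ hl₀23).1
      by_cases hbl₀ : 0 < b l₀
      · -- coefficient b l₀ > 0
        refine ⟨b, ⟨ha'bd, hb, ha'en, heb⟩, ?_⟩
        unfold Obj
        rw [sum_diff_one P3 (fun x => a x * b x) (fun x => a' x * b x) hP3
          (fun x _ hxne => by simp only [ha'ne x hxne]),
          sum_same P1 (fun x => a x * bbar x) (fun x => a' x * bbar x)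
          (fun x hx => by simp only [ha'ne x (fun he => hl₀P1 (he ▸ hx))]), ha'l₀]
        nlinarith [mul_pos hεpos hbl₀]
      · -- b l₀ = 0
        have hb0 : b l₀ = 0 := le_antisymm (not_lt.1 hbl₀) hbl₀0
        set Sb := ∑ l ∈ P2 ∪ P3, (b l) ^ 2 with hSbdef
        by_cases hSb : Sb < eQ
        · -- slack in the b-budget: raise b at l₀
          set δ := min B (Real.sqrt (eQ - Sb)) with hδdef
          have hδpos : 0 < δ := lt_min hB (Real.sqrt_pos.2 (by linarith))
          have hδB : δ ≤ B := min_le_left _ _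
          have hδsq : δ ^ 2 ≤ eQ - Sb := by
            have h1 : δ ≤ Real.sqrt (eQ - Sb) := min_le_right _ _
            have h2 : δ ^ 2 ≤ Real.sqrt (eQ - Sb) ^ 2 :=
              pow_le_pow_left₀ hδpos.le h1 2
            rwa [Real.sq_sqrt (by linarith : (0:ℝ) ≤ eQ - Sb)] at h2
          set b' : ι → ℝ := fun x => if x = l₀ then δ else b x with hb'def
          have hb'l₀ : b' l₀ = δ := by simp [hb'def]
          have hb'ne : ∀ x, x ≠ l₀ → b' x = b x := fun x hx => by simp [hb'def, hx]
          refine ⟨b', ⟨ha'bd, ?_, ha'en, ?_⟩, ?_⟩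
          · intro l hl
            by_cases h : l = l₀
            · subst h; rw [hb'l₀]; exact ⟨hδpos.le, hδB⟩
            · rw [hb'ne l h]; exact hb l hl
          · rw [sum_diff_one (P2 ∪ P3) (fun x => (b x) ^ 2) (fun x => (b' x) ^ 2) hl₀23
              (fun x _ hxne => by simp only [hb'ne x hxne]), hb'l₀, hb0]
            simp only [← hSbdef]
            nlinarith
          · unfold Obj
            rw [sum_diff_one P3 (fun x => a x * b x) (fun x => a' x * b' x) hP3
              (fun x _ hxne => by simp only [ha'ne x hxne, hb'ne x hxne]),
              sum_same P1 (fun x => a x * bbar x) (fun x => a' x * bbar x)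
              (fun x hx => by simp only [ha'ne x (fun he => hl₀P1 (he ▸ hx))]),
              sum_same P2 (fun x => abar x * b x) (fun x => abar x * b' x)
              (fun x hx => by simp only [hb'ne x (fun he => hl₀P2 (he ▸ hx))]),
              ha'l₀, hb'l₀, hb0]
            nlinarith [mul_pos hεpos hδpos, mul_nonneg hal₀0 hδpos.le]
        · -- b-budget tight: move mass from some l₁ to l₀
          have hSbeq : Sb = eQ := le_antisymm heb (not_lt.1 hSb)
          have hex1 : ∃ l₁ ∈ P2 ∪ P3, 0 < b l₁ := by
            by_contra hno
            push_neg at hno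
            have : Sb = 0 := by
              rw [hSbdef]
              refine Finset.sum_eq_zero fun x hx => ?_
              have hx0 : b x = 0 := le_antisymm (hno x hx) (hb x hx).1
              rw [hx0]; ring
            linarith
          obtain ⟨l₁, hl₁, hbl₁⟩ := hex1
          have hne10 : l₁ ≠ l₀ := fun he => by rw [he, hb0] at hbl₁; exact lt_irrefl 0 hbl₁
          have hbl₁B : b l₁ ≤ B := (hb l₁ hl₁).2
          set C := |abar l₁| + |a l₁| + 1 with hCdef
          have hC : 0 < C := by
            rw [hCdef]
            positivity
          set δ := min (min (b l₁) B) (ε * b l₁ / (2 * C)) with hδdef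
          have hδpos : 0 < δ := lt_min (lt_min hbl₁ hB) (div_pos (mul_pos hεpos hbl₁) (by linarith))
          have hδb₁ : δ ≤ b l₁ := le_trans (min_le_left _ _) (min_le_left _ _)
          have hδB : δ ≤ B := le_trans (min_le_left _ _) (min_le_right _ _)
          have hδC : δ ≤ ε * b l₁ / (2 * C) := min_le_right _ _
          set θ := δ ^ 2 / b l₁ with hθdef
          have hθ0 : 0 ≤ θ := div_nonneg (sq_nonneg δ) hbl₁.le
          have hθb : θ * b l₁ = δ ^ 2 := div_mul_cancel₀ _ (ne_of_gt hbl₁)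
          have hθδ : θ ≤ δ := by
            rw [hθdef, div_le_iff₀ hbl₁]
            nlinarith
          have hθb₁ : θ ≤ b l₁ := le_trans hθδ hδb₁
          set b' : ι → ℝ := fun x => if x = l₀ then δ else if x = l₁ then b l₁ - θ else b x
            with hb'def
          have hb'l₀ : b' l₀ = δ := by simp [hb'def]
          have hb'l₁ : b' l₁ = b l₁ - θ := by simp [hb'def, hne10]
          have hb'ne : ∀ x, x ≠ l₀ → x ≠ l₁ → b' x = b x := fun x hx hx' => by
            simp [hb'def, hx, hx']
          have hb'bd : ∀ l ∈ P2 ∪ P3, 0 ≤ b' l ∧ b' l ≤ B := by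
            intro l hl
            by_cases h : l = l₀
            · subst h; rw [hb'l₀]; exact ⟨hδpos.le, hδB⟩
            by_cases h' : l = l₁
            · subst h'; rw [hb'l₁]; constructor <;> linarith
            · rw [hb'ne l h h']; exact hb l hl
          have hb'en : ∑ l ∈ P2 ∪ P3, (b' l) ^ 2 ≤ eQ := by
            rw [sum_diff_two (P2 ∪ P3) (fun x => (b x) ^ 2) (fun x => (b' x) ^ 2)
              hl₀23 hl₁ (Ne.symm hne10)
              (fun x _ hx hx' => by simp only [hb'ne x hx hx']), hb'l₀, hb'l₁, hb0]
            simp only [← hSbdef]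
            nlinarith
          refine ⟨b', ⟨ha'bd, hb'bd, ha'en, hb'en⟩, ?_⟩
          rcases Finset.mem_union.1 hl₁ with hl₁P2 | hl₁P3
          · -- l₁ ∈ P2
            have hl₁P3 : l₁ ∉ P3 := Finset.disjoint_left.1 h23 hl₁P2
            unfold Obj
            rw [sum_diff_one P2 (fun x => abar x * b x) (fun x => abar x * b' x) hl₁P2
              (fun x hx hxne => by
                simp only [hb'ne x (fun he => hl₀P2 (he ▸ hx)) hxne]),
              sum_diff_one P3 (fun x => a x * b x) (fun x => a' x * b' x) hP3
              (fun x hx hxne => by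
                simp only [ha'ne x hxne, hb'ne x hxne (fun he => hl₁P3 (he ▸ hx))]),
              sum_same P1 (fun x => a x * bbar x) (fun x => a' x * bbar x)
              (fun x hx => by simp only [ha'ne x (fun he => hl₀P1 (he ▸ hx))]),
              ha'l₀, hb'l₀, hb'l₁, hb0]
            have hkey := key_ineq C ε δ θ (b l₁) (abar l₁) (a l₀)
              (by rw [hCdef]; nlinarith [le_abs_self (abar l₁), abs_nonneg (a l₁)])
              hC hεpos hδpos hbl₁ hθb hθ0 hδC hal₀0
            nlinarith
          · -- l₁ ∈ P3
            have hl₁P2' : l₁ ∉ P2 := Finset.disjoint_right.1 h23 hl₁P3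
            unfold Obj
            rw [sum_diff_two P3 (fun x => a x * b x) (fun x => a' x * b' x) hP3 hl₁P3
              (Ne.symm hne10)
              (fun x _ hx hx' => by simp only [ha'ne x hx, hb'ne x hx hx']),
              sum_same P1 (fun x => a x * bbar x) (fun x => a' x * bbar x)
              (fun x hx => by simp only [ha'ne x (fun he => hl₀P1 (he ▸ hx))]),
              sum_same P2 (fun x => abar x * b x) (fun x => abar x * b' x)
              (fun x hx => by
                simp only [hb'ne x (fun he => hl₀P2 (he ▸ hx)) (fun he => hl₁P2' (he ▸ hx))]),
              ha'l₀, hb'l₀, hb'l₁, hb0, ha'ne l₁ hne10]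
            have hkey := key_ineq C ε δ θ (b l₁) (a l₁) (a l₀)
              (by rw [hCdef]; nlinarith [le_abs_self (a l₁), abs_nonneg (abar l₁)])
              hC hεpos hδpos hbl₁ hθb hθ0 hδC hal₀0
            nlinarith
  obtain ⟨b', hfeas', hlt⟩ := hkey
  exact absurd (hopt a' b' hfeas') (not_le.2 hlt)

/-- The energy constraints are active at every optimum: if `0 < eX ≤ (|P1|+|P3|)·A²`
and `0 < eQ ≤ (|P2|+|P3|)·B²`, then every optimal pair saturates both energy
budgets. -/
theorem energy_constraints_active_at_optimum {ι : Type*} [DecidableEq ι]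
    (P1 P2 P3 : Finset ι)
    (h12 : Disjoint P1 P2) (h13 : Disjoint P1 P3) (h23 : Disjoint P2 P3)
    (A B eX eQ : ℝ) (hA : 0 < A) (hB : 0 < B) (heX : 0 < eX) (heQ : 0 < eQ)
    (hXcap : eX ≤ ((P1.card : ℝ) + (P3.card : ℝ)) * A ^ 2)
    (hQcap : eQ ≤ ((P2.card : ℝ) + (P3.card : ℝ)) * B ^ 2)
    (bbar abar : ι → ℝ)
    (hbbar : ∀ l ∈ P1, B ≤ bbar l) (habar : ∀ l ∈ P2, A ≤ abar l)
    (a b : ι → ℝ)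
    (hfeas : Feasible P1 P2 P3 A B eX eQ a b)
    (hopt : ∀ a' b' : ι → ℝ, Feasible P1 P2 P3 A B eX eQ a' b' →
      Obj P1 P2 P3 bbar abar a b ≤ Obj P1 P2 P3 bbar abar a' b') :
    (∑ l ∈ P1 ∪ P3, (a l) ^ 2) = eX ∧ (∑ l ∈ P2 ∪ P3, (b l) ^ 2) = eQ := by
  constructor
  · exact tightX P1 P2 P3 h13 h23 A B eX eQ hA hB heX heQ hXcap bbar abar hbbar a b hfeas hopt
  · have hfeas' : Feasible P2 P1 P3 B A eQ eX b a :=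
      ⟨hfeas.2.1, hfeas.1, hfeas.2.2.2, hfeas.2.2.1⟩
    have hopt' : ∀ b' a' : ι → ℝ, Feasible P2 P1 P3 B A eQ eX b' a' →
        Obj P2 P1 P3 abar bbar b a ≤ Obj P2 P1 P3 abar bbar b' a' := by
      intro b' a' hf
      rw [obj_swap P1 P2 P3 bbar abar a b, obj_swap P1 P2 P3 bbar abar a' b']
      exact hopt a' b' ⟨hf.2.1, hf.1, hf.2.2.2, hf.2.2.1⟩
    exact tightX P2 P1 P3 h23 h13 B A eQ eX hB hA heQ heX hQcap abar bbar habar b a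
      hfeas' hopt'
end
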